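/- For the convolutional check matrix over GF(2)(D) with Z-part rows [0; (h(D), D, 0, 1, h(D)); (0,0,D,D,D); (0, D⁻¹, 1, D⁻¹, 0); (0, D⁻¹, 0, 0, 0)] and X-part rows [(h(D),0,D,1,h(D)); 0; (0,1,0,1,1); 0; (0,0,1,0,0)] where h(D)=1+D, the shifted symplectic product matrix H_X(D)H_Z^T(D⁻¹) + H_Z(D)H_X^T(D⁻¹) equals the 5×5 binary matrix with ones exactly at positions (1,2),(2,1),(4,5),(5,4), which has rank 4. -/

import Mathlib

open Matrix

noncomputable section StmtAux

abbrev FF₁₈ := RatFunc (ZMod 2)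

lemma two0₁₈ : (2 : FF₁₈) = 0 := by
  have : CharP FF₁₈ 2 := IsFractionRing.charP_of_isFractionRing (Polynomial (ZMod 2)) 2
  exact CharP.cast_eq_zero FF₁₈ 2

lemma n3₁₈ : (3:FF₁₈) = 1 := by linear_combination two0₁₈
lemma n4₁₈ : (4:FF₁₈) = 0 := by linear_combination 2*two0₁₈
lemma n5₁₈ : (5:FF₁₈) = 1 := by linear_combination 2*two0₁₈
lemma n6₁₈ : (6:FF₁₈) = 0 := by linear_combination 3*two0₁₈
lemma n7₁₈ : (7:FF₁₈) = 1 := by linear_combination 3*two0₁₈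
lemma n8₁₈ : (8:FF₁₈) = 0 := by linear_combination 4*two0₁₈
lemma n9₁₈ : (9:FF₁₈) = 1 := by linear_combination 4*two0₁₈

set_option maxHeartbeats 2000000 in
lemma tposeZ₁₈ :
    (!![(0:FF₁₈),0,0,0,0; 1+RatFunc.X⁻¹, RatFunc.X⁻¹, 0, 1, 1+RatFunc.X⁻¹;
        0,0,RatFunc.X⁻¹,RatFunc.X⁻¹,RatFunc.X⁻¹; 0,RatFunc.X,1,RatFunc.X,0;
        0,RatFunc.X,0,0,0]).transpose
    = !![(0:FF₁₈), 1+RatFunc.X⁻¹, 0, 0, 0;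
         0, RatFunc.X⁻¹, 0, RatFunc.X, RatFunc.X;
         0, 0, RatFunc.X⁻¹, 1, 0;
         0, 1, RatFunc.X⁻¹, RatFunc.X, 0;
         0, 1+RatFunc.X⁻¹, RatFunc.X⁻¹, 0, 0] := by
  ext i j
  fin_cases i <;> fin_cases j <;> rfl

set_option maxHeartbeats 2000000 in
lemma tposeX₁₈ :
    (!![1+RatFunc.X⁻¹, 0, RatFunc.X⁻¹, 1, 1+RatFunc.X⁻¹; (0:FF₁₈),0,0,0,0;
        0,1,0,1,1; 0,0,0,0,0; 0,0,1,0,0]).transpose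
    = !![1+RatFunc.X⁻¹, (0:FF₁₈), 0, 0, 0;
         0, 0, 1, 0, 0;
         RatFunc.X⁻¹, 0, 0, 0, 1;
         1, 0, 1, 0, 0;
         1+RatFunc.X⁻¹, 0, 1, 0, 0] := by
  ext i j
  fin_cases i <;> fin_cases j <;> rfl

set_option maxHeartbeats 2000000 in
lemma key₁₈ :
    (!![1+RatFunc.X, 0, RatFunc.X, 1, 1+RatFunc.X; (0:FF₁₈),0,0,0,0; 0,1,0,1,1; 0,0,0,0,0; 0,0,1,0,0] *
      !![(0:FF₁₈), 1+RatFunc.X⁻¹, 0, 0, 0;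
         0, RatFunc.X⁻¹, 0, RatFunc.X, RatFunc.X;
         0, 0, RatFunc.X⁻¹, 1, 0;
         0, 1, RatFunc.X⁻¹, RatFunc.X, 0;
         0, 1+RatFunc.X⁻¹, RatFunc.X⁻¹, 0, 0]
     + !![(0:FF₁₈),0,0,0,0; 1+RatFunc.X, RatFunc.X, 0, 1, 1+RatFunc.X;
          0,0,RatFunc.X,RatFunc.X,RatFunc.X; 0,RatFunc.X⁻¹,1,RatFunc.X⁻¹,0; 0,RatFunc.X⁻¹,0,0,0] *
      !![1+RatFunc.X⁻¹, (0:FF₁₈), 0, 0, 0;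
         0, 0, 1, 0, 0;
         RatFunc.X⁻¹, 0, 0, 0, 1;
         1, 0, 1, 0, 0;
         1+RatFunc.X⁻¹, 0, 1, 0, 0])
    = !![(0:FF₁₈),1,0,0,0; 1,0,0,0,0; 0,0,0,0,0; 0,0,0,0,1; 0,0,0,1,0] := by
  have hX : (RatFunc.X : FF₁₈) ≠ 0 := RatFunc.X_ne_zero
  simp
  repeat' apply And.intro
  all_goals first
      | trivial
      | ((try field_simp); (try ring_nf);
         simp [two0₁₈, n3₁₈, n4₁₈, n5₁₈, n6₁₈, n7₁₈, n8₁₈, n9₁₈])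

set_option maxHeartbeats 2000000 in
lemma diagLit₁₈ : (Matrix.diagonal (![1,1,0,1,1] : Fin 5 → FF₁₈)) =
    !![(1:FF₁₈),0,0,0,0; 0,1,0,0,0; 0,0,0,0,0; 0,0,0,1,0; 0,0,0,0,1] := by
  ext i j
  fin_cases i <;> fin_cases j <;>
    first
      | rfl
      | simp [Matrix.diagonal, Matrix.vecHead, Matrix.vecTail]

set_option maxHeartbeats 2000000 in
lemma detP₁₈ :
    (!![(0:FF₁₈),1,0,0,0; 1,0,0,0,0; 0,0,1,0,0; 0,0,0,0,1; 0,0,0,1,0]).det = 1 := by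
  simp [Matrix.det_succ_row_zero, Fin.sum_univ_succ, Fin.succAbove,
    two0₁₈, n3₁₈]

set_option maxHeartbeats 2000000 in
lemma decomp₁₈ :
    (!![(0:FF₁₈),1,0,0,0; 1,0,0,0,0; 0,0,0,0,0; 0,0,0,0,1; 0,0,0,1,0])
    = !![(0:FF₁₈),1,0,0,0; 1,0,0,0,0; 0,0,1,0,0; 0,0,0,0,1; 0,0,0,1,0] *
      Matrix.diagonal (![1,1,0,1,1] : Fin 5 → FF₁₈) := by
  rw [diagLit₁₈]
  ext i j
  fin_cases i <;> fin_cases j <;>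
    first
      | rfl
      | simp [Matrix.mul_apply, Fin.sum_univ_five, Matrix.vecHead, Matrix.vecTail]

set_option maxHeartbeats 2000000 in
lemma rank4₁₈ :
    (!![(0:FF₁₈),1,0,0,0; 1,0,0,0,0; 0,0,0,0,0; 0,0,0,0,1; 0,0,0,1,0]).rank = 4 := by
  classical
  rw [decomp₁₈, Matrix.rank_mul_eq_right_of_isUnit_det _ _
      (by rw [detP₁₈]; exact isUnit_one), Matrix.rank_diagonal]
  have e : ∀ i : Fin 5, ((![1,1,0,1,1] : Fin 5 → FF₁₈) i ≠ 0) ↔ i ≠ 2 := by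
    intro i
    fin_cases i <;> simp
  refine Eq.trans (Fintype.card_congr (Equiv.subtypeEquivRight e)) ?_
  decide

end StmtAux

theorem stmt_18 :
    letI F := RatFunc (ZMod 2)
    letI D : F := RatFunc.X
    letI h : F := 1 + D
    letI hinv : F := 1 + D⁻¹
    -- the Z-part H_Z(D) and X-part H_X(D) of the check matrix
    letI HZ : Matrix (Fin 5) (Fin 5) F :=
      !![0, 0, 0, 0, 0;
         h, D, 0, 1, h;
         0, 0, D, D, D;
         0, D⁻¹, 1, D⁻¹, 0;
         0, D⁻¹, 0, 0, 0]
    letI HX : Matrix (Fin 5) (Fin 5) F :=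
      !![h, 0, D, 1, h;
         0, 0, 0, 0, 0;
         0, 1, 0, 1, 1;
         0, 0, 0, 0, 0;
         0, 0, 1, 0, 0]
    -- the matrices H_Z(D⁻¹) and H_X(D⁻¹), obtained by substituting D ↦ D⁻¹
    letI HZinv : Matrix (Fin 5) (Fin 5) F :=
      !![0, 0, 0, 0, 0;
         hinv, D⁻¹, 0, 1, hinv;
         0, 0, D⁻¹, D⁻¹, D⁻¹;
         0, D, 1, D, 0;
         0, D, 0, 0, 0]
    letI HXinv : Matrix (Fin 5) (Fin 5) F :=
      !![hinv, 0, D⁻¹, 1, hinv;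
         0, 0, 0, 0, 0;
         0, 1, 0, 1, 1;
         0, 0, 0, 0, 0;
         0, 0, 1, 0, 0]
    letI Ω := HX * HZinv.transpose + HZ * HXinv.transpose
    Ω = !![0, 1, 0, 0, 0;
           1, 0, 0, 0, 0;
           0, 0, 0, 0, 0;
           0, 0, 0, 0, 1;
           0, 0, 0, 1, 0] ∧ Ω.rank = 4 := by
  have hmain :
      (!![1+RatFunc.X, 0, RatFunc.X, 1, 1+RatFunc.X; (0:FF₁₈),0,0,0,0; 0,1,0,1,1;
          0,0,0,0,0; 0,0,1,0,0] *
        (!![(0:FF₁₈),0,0,0,0; 1+RatFunc.X⁻¹, RatFunc.X⁻¹, 0, 1, 1+RatFunc.X⁻¹;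
            0,0,RatFunc.X⁻¹,RatFunc.X⁻¹,RatFunc.X⁻¹; 0,RatFunc.X,1,RatFunc.X,0;
            0,RatFunc.X,0,0,0]).transpose
       + !![(0:FF₁₈),0,0,0,0; 1+RatFunc.X, RatFunc.X, 0, 1, 1+RatFunc.X;
            0,0,RatFunc.X,RatFunc.X,RatFunc.X; 0,RatFunc.X⁻¹,1,RatFunc.X⁻¹,0;
            0,RatFunc.X⁻¹,0,0,0] *
        (!![1+RatFunc.X⁻¹, 0, RatFunc.X⁻¹, 1, 1+RatFunc.X⁻¹; (0:FF₁₈),0,0,0,0;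
            0,1,0,1,1; 0,0,0,0,0; 0,0,1,0,0]).transpose)
      = !![(0:FF₁₈),1,0,0,0; 1,0,0,0,0; 0,0,0,0,0; 0,0,0,0,1; 0,0,0,1,0] := by
    rw [tposeZ₁₈, tposeX₁₈]
    exact key₁₈
  exact ⟨hmain, by rw [hmain]; exact rank4₁₈⟩
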